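/- Every nondegenerate Hermitian form on a finite-dimensional vector space over the finite field F_{q^2} (with involution x ↦ x^q) admits an orthonormal basis. -/

import Mathlib

lemma my_q_ge_two (F : Type*) [Field F] [Fintype F] (q : ℕ) (hq : Fintype.card F = q ^ 2) :
    2 ≤ q := by
  have h := Fintype.one_lt_card (α := F)
  rw [hq] at h
  by_contra hlt
  push_neg at hlt
  interval_cases q <;> omega

lemma my_frob_add (F : Type*) [Field F] [Fintype F] (q : ℕ) (hq : Fintype.card F = q ^ 2)
    (x y : F) : (x + y) ^ q = x ^ q + y ^ q := by
  obtain ⟨p, hp⟩ := CharP.exists F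
  have hpp : p.Prime := CharP.char_is_prime F p
  haveI : Fact p.Prime := ⟨hpp⟩
  obtain ⟨f, hf⟩ := FiniteField.card F p
  have hdvd : q ∣ p ^ (f : ℕ) := by
    refine dvd_trans (dvd_pow_self q (by norm_num : (2:ℕ) ≠ 0)) ?_
    rw [← hq, hf.2]
  obtain ⟨s, _, hs⟩ := (Nat.dvd_prime_pow hpp).mp hdvd
  subst hs
  exact add_pow_char_pow (x:=x) (y:=y) p s

lemma my_norm_surj (F : Type*) [Field F] [Fintype F] (q : ℕ) (hq : Fintype.card F = q ^ 2)
    (a : F) (ha : a ≠ 0) (haq : a ^ q = a) : ∃ c : F, c * c ^ q = a := by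
  classical
  have hq2 := my_q_ge_two F q hq
  obtain ⟨g, hg⟩ := IsCyclic.exists_generator (α := Fˣ)
  have horder : orderOf g = q ^ 2 - 1 := by
    rw [orderOf_eq_card_of_forall_mem_zpowers hg, Nat.card_eq_fintype_card, Fintype.card_units, hq]
  set u : Fˣ := Units.mk0 a ha with hu
  obtain ⟨k, hk⟩ := hg u
  have hk' : g ^ k = u := hk
  have hu1 : u ^ (q - 1) = 1 := by
    apply Units.ext
    rw [Units.val_pow_eq_pow_val, Units.val_one]
    show a ^ (q - 1) = 1
    have hstep : a ^ (q - 1) * a = 1 * a := by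
      rw [one_mul, ← pow_succ, Nat.sub_add_cancel (by omega), haq]
    exact mul_right_cancel₀ ha hstep
  have hdvd : ((q:ℤ) ^ 2 - 1) ∣ k * ((q:ℤ) - 1) := by
    have hzp : g ^ (k * ((q:ℤ) - 1)) = 1 := by
      rw [zpow_mul, hk']
      have hcast : ((q:ℤ) - 1) = ((q - 1 : ℕ) : ℤ) := by
        rw [Nat.cast_sub (by omega : 1 ≤ q)]; push_cast; ring
      rw [hcast, zpow_natCast, hu1]
    have h2 := orderOf_dvd_iff_zpow_eq_one.mpr hzp
    rwa [horder, Nat.cast_sub (by nlinarith : 1 ≤ q ^ 2), Nat.cast_pow, Nat.cast_one] at h2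
  have hq1ne : (q:ℤ) - 1 ≠ 0 := by omega
  obtain ⟨t, ht⟩ := hdvd
  have hm : k = ((q:ℤ) + 1) * t := by
    have hstep : k * ((q:ℤ) - 1) = (((q:ℤ) + 1) * t) * ((q:ℤ) - 1) := by rw [ht]; ring
    exact mul_right_cancel₀ hq1ne hstep
  refine ⟨(g ^ t : Fˣ), ?_⟩
  have hgt : (g ^ t) ^ ((q:ℤ) + 1) = u := by
    rw [← zpow_mul, ← hk', hm, mul_comm]
  have hkey : (g ^ t) * (g ^ t) ^ (q : ℕ) = u := by
    calc (g ^ t) * (g ^ t) ^ (q:ℕ) = (g ^ t) ^ (1 : ℤ) * (g ^ t) ^ (q : ℤ) := by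
          rw [zpow_one, zpow_natCast]
      _ = (g ^ t) ^ ((q:ℤ) + 1) := by rw [← zpow_add]; ring_nf
      _ = u := hgt
  have hval : ((g ^ t : Fˣ) : F) * ((g ^ t : Fˣ) : F) ^ q = ((u : Fˣ) : F) := by
    rw [← hkey]; push_cast; ring
  simpa [hu] using hval

lemma my_exists_pow_ne (F : Type*) [Field F] [Fintype F] (q : ℕ)
    (hq : Fintype.card F = q ^ 2) : ∃ c : F, c ^ q ≠ c := by
  classical
  have hq2 := my_q_ge_two F q hq
  by_contra hall
  push_neg at hall
  set P : Polynomial F := Polynomial.X ^ q - Polynomial.X with hP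
  have hdeg : P.natDegree = q := by
    rw [hP, Polynomial.natDegree_sub_eq_left_of_natDegree_lt] <;>
      simp [Polynomial.natDegree_X_pow, Polynomial.natDegree_X] <;> omega
  have hPne : P ≠ 0 := fun h0 => by simp [h0] at hdeg; omega
  have hroots : ∀ x : F, x ∈ P.roots := by
    intro x
    rw [Polynomial.mem_roots hPne]
    simp [hP, sub_eq_zero, hall x]
  have h1 : (Finset.univ : Finset F) ⊆ P.roots.toFinset :=
    fun x _ => Multiset.mem_toFinset.mpr (hroots x)
  have h2 := Finset.card_le_card h1
  have h3 := P.roots.toFinset_card_le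
  have h4 := P.card_roots'
  rw [Finset.card_univ, hq] at h2
  rw [hdeg] at h4
  nlinarith

universe u

lemma my_main (F : Type*) [Field F] [Fintype F] (q : ℕ) (hq : Fintype.card F = q ^ 2)
    (n : ℕ) :
    ∀ (V : Type u) [AddCommGroup V] [Module F V] [FiniteDimensional F V]
      (h : V → V → F),
      (∀ u v w, h (u + v) w = h u w + h v w) →
      (∀ (c : F) (v w : V), h (c • v) w = c * h v w) →
      (∀ v w, h v w = (h w v) ^ q) →
      (∀ v, (∀ w, h v w = 0) → v = 0) →
      Module.finrank F V = n →
      ∃ b : Module.Basis (Fin n) F V, ∀ i j, h (b i) (b j) = if i = j then 1 else 0 := by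
  have hq2 := my_q_ge_two F q hq
  induction n with
  | zero =>
    intro V _ _ _ h _ _ _ _ hrank
    haveI : Subsingleton V := (Module.finrank_zero_iff (R := F)).mp hrank
    exact ⟨Module.Basis.empty V, fun i _ => absurd i.2 (by omega)⟩
  | succ n ih =>
    intro V _ _ _ h hadd hsmul hherm hnondeg hrank
    -- basic facts
    have hzero : ∀ w : V, h 0 w = 0 := by
      intro w
      have := hadd 0 0 w
      rw [add_zero] at this
      exact left_eq_add.mp this
    have hzero2 : ∀ v : V, h v 0 = 0 := by
      intro v
      rw [hherm, hzero, zero_pow (by omega : q ≠ 0)]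
    have hadd2 : ∀ u v w : V, h u (v + w) = h u v + h u w := by
      intro u v w
      rw [hherm, hadd, my_frob_add F q hq, ← hherm, ← hherm]
    have hsmul2 : ∀ (c : F) (u w : V), h u (c • w) = c ^ q * h u w := by
      intro c u w
      rw [hherm, hsmul, mul_pow, ← hherm]
    -- existence of an anisotropic vector
    have haniso : ∃ v : V, h v v ≠ 0 := by
      by_contra hall
      push_neg at hall
      haveI : Nontrivial V := Module.nontrivial_of_finrank_pos (R := F) (by omega)
      obtain ⟨v0, hv0⟩ := exists_ne (0 : V)
      have hne : ∃ w, h v0 w ≠ 0 := by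
        by_contra hc; push_neg at hc; exact hv0 (hnondeg v0 hc)
      obtain ⟨w, hw⟩ := hne
      set a := h v0 w with ha
      have key : ∀ c : F, c * a + c ^ q * a ^ q = 0 := by
        intro c
        have expand : h (c • v0 + w) (c • v0 + w) = c * a + c ^ q * a ^ q := by
          rw [hadd, hsmul, hadd2, hadd2, hsmul2, hsmul2, hall, hall, ← hherm]
          ring
        rw [hall] at expand
        linear_combination -expand
      have h1 : a + a ^ q = 0 := by simpa using key 1
      obtain ⟨c, hc⟩ := my_exists_pow_ne F q hq
      have h2 := key c
      have haq' : a ^ q = -a := by linear_combination h1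
      rw [haq'] at h2
      have h3 : a * (c - c ^ q) = 0 := by linear_combination h2
      rcases mul_eq_zero.mp h3 with h4 | h4
      · exact hw h4
      · exact hc (sub_eq_zero.mp h4).symm
    obtain ⟨v, hv⟩ := haniso
    set d := h v v with hd
    have hdq : d ^ q = d := (hherm v v).symm
    have hdinv : (d⁻¹) ^ q = d⁻¹ := by rw [inv_pow, hdq]
    obtain ⟨c, hc⟩ := my_norm_surj F q hq d⁻¹ (inv_ne_zero hv) hdinv
    set e := c • v with he
    have hee : h e e = 1 := by
      rw [he, hsmul, hsmul2, ← mul_assoc, hc, inv_mul_cancel₀ hv]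
    -- the linear functional w ↦ h w e
    set φ : V →ₗ[F] F :=
      { toFun := fun w => h w e
        map_add' := fun x y => hadd x y e
        map_smul' := fun r x => hsmul r x e } with hφ
    have hφe : φ e = 1 := hee
    have hφsurj : LinearMap.range φ = ⊤ := by
      rw [LinearMap.range_eq_top]
      intro x
      refine ⟨x • e, ?_⟩
      show h (x • e) e = x
      rw [hsmul, hee, mul_one]
    set W := LinearMap.ker φ with hW
    have hrankW : Module.finrank F W = n := by
      have := LinearMap.finrank_range_add_finrank_ker φ
      rw [hφsurj, finrank_top, hrank, Module.finrank_self, ← hW] at this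
      omega
    -- restricted form
    set h' : W → W → F := fun x y => h x y with hh'
    have hnd : ∀ x : W, (∀ y : W, h' x y = 0) → x = 0 := by
      intro x hx
      have hxe : h (x : V) e = 0 := x.2
      have : (x : V) = 0 := by
        apply hnondeg
        intro u
        have hu' : u - φ u • e ∈ W := by
          simp only [hW, LinearMap.mem_ker, map_sub, map_smul, hφe, smul_eq_mul, mul_one,
            sub_self]
        have h1 : h (x : V) (u - φ u • e) = 0 := hx ⟨u - φ u • e, hu'⟩
        have h2 : h (x : V) u = h (x : V) (u - φ u • e) + (φ u) ^ q * h (x : V) e := by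
          rw [← hsmul2, ← hadd2, sub_add_cancel]
        rw [h1, hxe, mul_zero, add_zero] at h2
        exact h2
      exact Subtype.ext this
    have hIH := ih W h'
      (fun u v w => hadd u v w)
      (fun c v w => by
        simp only [hh']
        rw [← hsmul]
        rfl)
      (fun v w => hherm v w)
      hnd hrankW
    obtain ⟨b', hb'⟩ := hIH
    -- assemble the basis
    have hli : ∀ (cc : F), ∀ x ∈ W, cc • e + x = 0 → cc = 0 := by
      intro cc x hxW hsum
      have := congrArg φ hsum
      simp only [map_add, map_smul, hφe, smul_eq_mul, mul_one, map_zero] at this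
      rwa [LinearMap.mem_ker.mp hxW, add_zero] at this
    have hsp : ∀ z : V, ∃ cc : F, z + cc • e ∈ W := by
      intro z
      refine ⟨-φ z, ?_⟩
      simp [hW, LinearMap.mem_ker, hφe]
    refine ⟨Module.Basis.mkFinCons e b' hli hsp, ?_⟩
    have hcoe : (Module.Basis.mkFinCons e b' hli hsp : Fin (n + 1) → V) = Fin.cons e ((↑) ∘ b') :=
      Module.Basis.coe_mkFinCons e b' hli hsp
    intro i j
    rw [hcoe]
    have hbe : ∀ i : Fin n, h ((b' i : V)) e = 0 := fun i => (b' i).2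
    have heb : ∀ i : Fin n, h e ((b' i : V)) = 0 := by
      intro i
      rw [hherm, hbe, zero_pow (by omega : q ≠ 0)]
    refine Fin.cases ?_ (fun i => ?_) i <;> [skip; skip] <;>
      refine Fin.cases ?_ (fun j => ?_) j
    · simpa using hee
    · simp [Fin.cons, heb j, (Fin.succ_ne_zero j).symm]
    · simp [Fin.cons, hbe i, Fin.succ_ne_zero i]
    · have := hb' i j
      simp only [hh'] at this
      simp [Fin.cons, this, Fin.succ_inj]

open Matrix

/-- Every nondegenerate Hermitian form on a finite-dimensional vector space over
`𝔽_{q²}` (with involution `x ↦ x^q`) admits an orthonormal basis. -/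
theorem stmt4 (F : Type*) [Field F] [Fintype F] (q : ℕ)
    (hq : Fintype.card F = q ^ 2)
    (V : Type*) [AddCommGroup V] [Module F V] [FiniteDimensional F V]
    (n : ℕ) (hn : Module.finrank F V = n)
    (h : V → V → F)
    (hadd : ∀ u v w, h (u + v) w = h u w + h v w)
    (hsmul : ∀ (c : F) (v w : V), h (c • v) w = c * h v w)
    (hherm : ∀ v w, h v w = (h w v) ^ q)
    (hnondeg : ∀ v, (∀ w, h v w = 0) → v = 0) :
    ∃ b : Module.Basis (Fin n) F V, ∀ i j, h (b i) (b j) = if i = j then 1 else 0 := by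
  exact my_main F q hq n V h hadd hsmul hherm hnondeg hn
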